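/- Let V be a finite-dimensional real inner product space, K : V → V symmetric positive semidefinite, and ε, σ, τ > 0. Suppose (uⁿ)ₙ in V and (wⁿ⁺¹)ₙ satisfy uⁿ⁺¹ + τσ K wⁿ⁺¹ = uⁿ and ε K uⁿ⁺¹ + ε⁻¹(∇W₊(uⁿ⁺¹) − ∇W₋(uⁿ)) = wⁿ⁺¹ for all n ≥ 0, with W₊, W₋ convex differentiable. Then the sequence of energies E(uⁿ) = (ε/2)⟨K uⁿ, uⁿ⟩ + ε⁻¹(W₊(uⁿ) − W₋(uⁿ)) is monotonically nonincreasing, and moreover E(u⁰) − E(u^N) ≥ τσ Σ_{n=0}^{N−1} ⟨K wⁿ⁺¹, wⁿ⁺¹⟩ for every N ≥ 1. -/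

import Mathlib

open scoped RealInnerProductSpace

lemma grad_ineq' {V : Type*} [NormedAddCommGroup V] [InnerProductSpace ℝ V]
    [FiniteDimensional ℝ V] {f : V → ℝ} {g : V → V}
    (hf : ConvexOn ℝ Set.univ f) (hg : ∀ x, HasGradientAt f (g x) x) (x y : V) :
    f x + ⟪g x, y - x⟫ ≤ f y := by
  set φ : ℝ → ℝ := fun t => f (AffineMap.lineMap x y t) with hφ
  have hconv : ConvexOn ℝ Set.univ φ := by
    have := hf.comp_affineMap (AffineMap.lineMap x y : ℝ →ᵃ[ℝ] V)
    simpa [Function.comp_def] using this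
  have hderiv : HasDerivAt φ ⟪g x, y - x⟫ 0 := by
    have h1 : HasDerivAt (fun t : ℝ => t • (y - x) + x) (y - x) 0 := by
      simpa using ((hasDerivAt_id (0:ℝ)).smul_const (y - x)).add_const x
    have h2 : HasFDerivAt f (InnerProductSpace.toDual ℝ V (g x)) ((0:ℝ) • (y - x) + x) := by
      simpa using (hg x).hasFDerivAt
    have h3 := h2.comp_hasDerivAt 0 h1
    have hfun : φ = f ∘ fun t : ℝ => t • (y - x) + x := by
      funext t
      simp only [φ, Function.comp, AffineMap.lineMap_apply_module]
      congr 1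
      module
    rw [hfun]
    simpa using h3
  have := ConvexOn.le_slope_of_hasDerivAt hconv (Set.mem_univ (0:ℝ)) (Set.mem_univ (1:ℝ))
    zero_lt_one hderiv
  have hs : slope φ 0 1 = f y - f x := by
    simp [slope_def_field, φ, AffineMap.lineMap_apply_module]
  rw [hs] at this
  linarith

theorem stmt_18 {V : Type*} [NormedAddCommGroup V] [InnerProductSpace ℝ V]
    [FiniteDimensional ℝ V]
    (K : V →ₗ[ℝ] V)
    (hKsym : ∀ x y : V, ⟪K x, y⟫ = ⟪x, K y⟫)
    (hKpos : ∀ v : V, 0 ≤ ⟪K v, v⟫)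
    (Wp Wm : V → ℝ) (gWp gWm : V → V)
    (hWpconv : ConvexOn ℝ Set.univ Wp) (hWmconv : ConvexOn ℝ Set.univ Wm)
    (hWp : ∀ x, HasGradientAt Wp (gWp x) x)
    (hWm : ∀ x, HasGradientAt Wm (gWm x) x)
    (ε σ τ : ℝ) (hε : 0 < ε) (hσ : 0 < σ) (hτ : 0 < τ)
    (u w : ℕ → V)
    (h1 : ∀ n, u (n+1) + (τ * σ) • K (w (n+1)) = u n)
    (h2 : ∀ n, ε • K (u (n+1)) + ε⁻¹ • (gWp (u (n+1)) - gWm (u n)) = w (n+1))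
    (E : V → ℝ)
    (hE : ∀ v, E v = (ε/2) * ⟪K v, v⟫ + ε⁻¹ * (Wp v - Wm v)) :
    (∀ n, E (u (n+1)) ≤ E (u n)) ∧
    (∀ N : ℕ, 1 ≤ N →
      E (u 0) - E (u N) ≥ τ * σ * ∑ n ∈ Finset.range N, ⟪K (w (n+1)), w (n+1)⟫) := by
  have key : ∀ n, τ * σ * ⟪K (w (n+1)), w (n+1)⟫ ≤ E (u n) - E (u (n+1)) := by
    intro n
    set a := u (n+1) with ha
    set b := u n with hb'
    set d : V := (τ * σ) • K (w (n+1)) with hd'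
    have hd : b - a = d := by rw [hb', ha, hd', ← h1 n]; abel
    have hbad : b = a + d := by rw [hb', ha, hd', ← h1 n]
    have had : a - b = -d := by rw [← hd]; abel
    -- quadratic identity
    have hq : ⟪K b, b⟫ = ⟪K a, a⟫ + 2 * ⟪K a, d⟫ + ⟪K d, d⟫ := by
      rw [hbad, map_add, inner_add_left, inner_add_right, inner_add_right,
        hKsym d a, real_inner_comm d (K a)]
      ring
    -- convexity inequalities
    have hp := grad_ineq' hWpconv hWp a b
    rw [hd] at hp
    have hm := grad_ineq' hWmconv hWm b a
    rw [had, inner_neg_right] at hm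
    have hp' : ε⁻¹ * Wp a + ε⁻¹ * ⟪gWp a, d⟫ ≤ ε⁻¹ * Wp b := by
      have := mul_le_mul_of_nonneg_left hp (le_of_lt (inv_pos.mpr hε))
      linarith [this]
    have hm' : ε⁻¹ * Wm b - ε⁻¹ * ⟪gWm b, d⟫ ≤ ε⁻¹ * Wm a := by
      have := mul_le_mul_of_nonneg_left hm (le_of_lt (inv_pos.mpr hε))
      linarith [this]
    -- inner product of w with d
    have hwd : ⟪w (n+1), d⟫
        = ε * ⟪K a, d⟫ + ε⁻¹ * ⟪gWp a, d⟫ - ε⁻¹ * ⟪gWm b, d⟫ := by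
      rw [← h2 n, inner_add_left, real_inner_smul_left, real_inner_smul_left,
        inner_sub_left]
      ring
    have hwd2 : ⟪w (n+1), d⟫ = τ * σ * ⟪K (w (n+1)), w (n+1)⟫ := by
      rw [hd', real_inner_smul_right, real_inner_comm]
    have hKd := hKpos d
    have hεKd : 0 ≤ ε / 2 * ⟪K d, d⟫ :=
      mul_nonneg (by positivity) hKd
    rw [hE a, hE b, hq]
    nlinarith [hp', hm', hwd, hwd2, hεKd]
  constructor
  · intro n
    have h0 : 0 ≤ τ * σ * ⟪K (w (n+1)), w (n+1)⟫ :=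
      mul_nonneg (mul_nonneg hτ.le hσ.le) (hKpos _)
    linarith [key n]
  · intro N hN
    have tele : ∑ n ∈ Finset.range N, (E (u n) - E (u (n+1))) = E (u 0) - E (u N) :=
      Finset.sum_range_sub' (fun n => E (u n)) N
    rw [ge_iff_le, ← tele, Finset.mul_sum]
    exact Finset.sum_le_sum fun n _ => key n
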